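/- (Erdős, Rubin, Taylor) For every integer k ≥ 1, the complete k-partite graph K_{2*k}, in which every part has exactly 2 vertices, has choice number exactly k. -/

import Mathlib

/-- `G` has a proper coloring in which every vertex gets a color from its own list. -/
def ListColorable {V : Type*} (G : SimpleGraph V) (L : V → Finset ℕ) : Prop :=
  ∃ c : V → ℕ, (∀ v, c v ∈ L v) ∧ ∀ ⦃u w⦄, G.Adj u w → c u ≠ c w

/-- `G` is `k`-choosable: `L`-colorable for every list assignment with all lists of size ≥ `k`. -/
def Choosable {V : Type*} (G : SimpleGraph V) (k : ℕ) : Prop :=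
  ∀ L : V → Finset ℕ, (∀ v, k ≤ (L v).card) → ListColorable G L

open Finset in
lemma key_K2xk : ∀ (k : ℕ) (L : (Σ _ : Fin k, Fin 2) → Finset ℕ),
    (∀ v, k ≤ (L v).card) →
    ∃ c : (Σ _ : Fin k, Fin 2) → ℕ, (∀ v, c v ∈ L v) ∧
      ∀ u w : (Σ _ : Fin k, Fin 2), u.1 ≠ w.1 → c u ≠ c w := by
  intro k
  induction k with
  | zero =>
    intro L _
    exact ⟨fun v => 0, fun v => v.1.elim0, fun u w _ => u.1.elim0⟩
  | succ m ih =>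
    intro L hL
    classical
    by_cases hcase : ∃ i : Fin (m + 1), ((L ⟨i, 0⟩) ∩ (L ⟨i, 1⟩)).Nonempty
    · obtain ⟨i, a, ha⟩ := hcase
      rw [Finset.mem_inter] at ha
      set L' : (Σ _ : Fin m, Fin 2) → Finset ℕ :=
        fun v => (L ⟨i.succAbove v.1, v.2⟩).erase a with hL'
      have hcard : ∀ v, m ≤ (L' v).card := by
        intro v
        have h1 := hL ⟨i.succAbove v.1, v.2⟩
        have h2 := Finset.pred_card_le_card_erase (a := a)
          (s := L ⟨i.succAbove v.1, v.2⟩)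
        simp only [hL']
        omega
      obtain ⟨c', hc'1, hc'2⟩ := ih L' hcard
      have hexist : ∀ v : Fin (m + 1), v ≠ i → ∃ j : Fin m, i.succAbove j = v :=
        fun v hv => Fin.exists_succAbove_eq hv
      refine ⟨fun v => if h : v.1 = i then a else c' ⟨(hexist v.1 h).choose, v.2⟩, ?_, ?_⟩
      · intro v
        by_cases h : v.1 = i
        · simp only [h, dif_pos]
          obtain ⟨i', s⟩ := v
          simp only at h
          subst h
          fin_cases s
          · exact ha.1
          · exact ha.2
        · simp only [h, dif_neg]
          have hm := hc'1 ⟨(hexist v.1 h).choose, v.2⟩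
          simp only [hL'] at hm
          rw [(hexist v.1 h).choose_spec] at hm
          exact (Finset.mem_erase.mp hm).2
      · intro u w huw
        by_cases hu : u.1 = i <;> by_cases hw : w.1 = i
        · exact absurd (hu.trans hw.symm) huw
        · simp only [hu, hw, dif_pos, dif_neg]
          have hm := hc'1 ⟨(hexist w.1 hw).choose, w.2⟩
          simp only [hL'] at hm
          exact fun he => (Finset.mem_erase.mp hm).1 he.symm
        · simp only [hu, hw, dif_pos, dif_neg]
          have hm := hc'1 ⟨(hexist u.1 hu).choose, u.2⟩
          simp only [hL'] at hm
          exact (Finset.mem_erase.mp hm).1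
        · simp only [hu, hw, dif_neg]
          apply hc'2
          simp only [ne_eq]
          intro he
          apply huw
          rw [← (hexist u.1 hu).choose_spec, ← (hexist w.1 hw).choose_spec, he]
    · push_neg at hcase
      have hdisj : ∀ i : Fin (m + 1), Disjoint (L ⟨i, 0⟩) (L ⟨i, 1⟩) := fun i =>
        Finset.disjoint_iff_inter_eq_empty.mpr
          (hcase i)
      have hall : ∀ s : Finset ((Σ _ : Fin (m + 1), Fin 2)),
          s.card ≤ (s.biUnion L).card := by
        intro s
        rcases s.eq_empty_or_nonempty with rfl | ⟨v, hv⟩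
        · simp
        by_cases hpair : ∃ i : Fin (m + 1), (⟨i, 0⟩ : Σ _ : Fin (m + 1), Fin 2) ∈ s ∧
            (⟨i, 1⟩ : Σ _ : Fin (m + 1), Fin 2) ∈ s
        · obtain ⟨i, h0, h1⟩ := hpair
          have hsub : L ⟨i, 0⟩ ∪ L ⟨i, 1⟩ ⊆ s.biUnion L := by
            apply Finset.union_subset <;> intro x hx <;>
              exact Finset.mem_biUnion.mpr ⟨_, ‹_›, hx⟩
          have hc := Finset.card_le_card hsub
          rw [Finset.card_union_of_disjoint (hdisj i)] at hc
          have ha := hL ⟨i, 0⟩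
          have hb := hL ⟨i, 1⟩
          have hs : s.card ≤ 2 * (m + 1) := by
            have := Finset.card_le_card (Finset.subset_univ s)
            simpa [Fintype.card_sigma, mul_comm] using this
          omega
        · push_neg at hpair
          have hinj : Set.InjOn (Sigma.fst : (Σ _ : Fin (m + 1), Fin 2) → Fin (m + 1)) ↑s := by
            intro u hu w hw h
            by_contra hne
            have h2 : u.2 ≠ w.2 := by
              intro h2
              exact hne (Sigma.ext h (heq_of_eq h2))
            obtain ⟨u1, u2⟩ := u
            obtain ⟨w1, w2⟩ := w
            simp only at h h2
            subst h
            fin_cases u2 <;> fin_cases w2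
            · exact h2 rfl
            · exact hpair u1 hu hw
            · exact hpair u1 hw hu
            · exact h2 rfl
          have hsc : s.card ≤ m + 1 := by
            have := Finset.card_le_card_of_injOn Sigma.fst
              (fun x _ => Finset.mem_univ x.1) hinj
            simpa using this
          have hsub : L v ⊆ s.biUnion L := fun x hx =>
            Finset.mem_biUnion.mpr ⟨v, hv, hx⟩
          have := Finset.card_le_card hsub
          have := hL v
          omega
      obtain ⟨f, hfinj, hf⟩ :=
        (Finset.all_card_le_biUnion_card_iff_exists_injective L).mp hall
      exact ⟨f, hf, fun u w h he => h (congrArg Sigma.fst (hfinj he))⟩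

/-- Erdős–Rubin–Taylor: `Ch(K_{2*k}) = k`. -/
theorem choiceNumber_K2xk (k : ℕ) (hk : 1 ≤ k) :
    IsLeast {n | Choosable (SimpleGraph.completeMultipartiteGraph
      (fun _ : Fin k => Fin 2)) n} k := by
  constructor
  · intro L hL
    obtain ⟨c, h1, h2⟩ := key_K2xk k L hL
    exact ⟨c, h1, fun u w h => h2 u w h⟩
  · intro n hn
    by_contra hlt
    push_neg at hlt
    obtain ⟨c, hc1, hc2⟩ := hn (fun _ => Finset.range n) (fun v => by simp)
    have hinj : Set.InjOn (fun i : Fin k => c ⟨i, 0⟩) ↑(Finset.univ : Finset (Fin k)) := by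
      intro i _ j _ h
      by_contra hne
      exact hc2 (show (⟨i, 0⟩ : Σ _ : Fin k, Fin 2).1 ≠ (⟨j, 0⟩ : Σ _ : Fin k, Fin 2).1
        from hne) h
    have hmap : ∀ i ∈ (Finset.univ : Finset (Fin k)),
        (fun i : Fin k => c ⟨i, 0⟩) i ∈ Finset.range n := fun i _ => hc1 ⟨i, 0⟩
    have := Finset.card_le_card_of_injOn _ hmap hinj
    simp at this
    omega
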